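/- Let G = (W,R) be the fan frame with root r and, for each n ∈ ω, a disjoint branch order-isomorphic to (n,<). Let φ be the modal formula □(p∧□p⊃q)∨□(q∧□q⊃p) for distinct propositional variables p, q. Then G does not validate ¬φ ⊃ ⊥: there is a valuation v such that ((W,R,v), r) ⊭ φ. Consequently, the non-compactness rule (from φ'⊃◇ⁿ⊤ for all n ∈ ω infer φ'⊃⊥) is not true at the modal algebra Alg(G). -/

import Mathlib

/-- Modal formulas over a countable set of propositional variables. -/
inductive Fml : Type where
  | prop : ℕ → Fml
  | top : Fml
  | and : Fml → Fml → Fml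
  | neg : Fml → Fml
  | box : Fml → Fml

namespace Fml
/-- `⊥` abbreviates `¬⊤`. -/
def bot : Fml := neg top
/-- `φ ∨ ψ` abbreviates `¬(¬φ ∧ ¬ψ)`. -/
def or (φ ψ : Fml) : Fml := neg (and (neg φ) (neg ψ))
/-- `φ ⊃ ψ` abbreviates `¬(φ ∧ ¬ψ)`. -/
def imp (φ ψ : Fml) : Fml := neg (and φ (neg ψ))
/-- `◇φ` abbreviates `¬□¬φ`. -/
def dia (φ : Fml) : Fml := neg (box (neg φ))
/-- `◇ⁿφ`: n-fold application of `◇`. -/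
def dian : ℕ → Fml → Fml
  | 0, φ => φ
  | n+1, φ => dia (dian n φ)
end Fml

/-- Truth of a modal formula at a world of a Kripke model `(W, R, v)`. -/
def Truth {W : Type} (R : W → W → Prop) (v : ℕ → Set W) : Fml → W → Prop
  | .prop n, w => w ∈ v n
  | .top, _ => True
  | .and φ ψ, w => Truth R v φ w ∧ Truth R v ψ w
  | .neg φ, w => ¬ Truth R v φ w
  | .box φ, w => ∀ w', R w w' → Truth R v φ w'

/-- Valuation of modal formulas in a modal algebra. -/
def aval {A : Type} [BooleanAlgebra A] (box : A → A) (v : ℕ → A) : Fml → A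
  | .prop n => v n
  | .top => ⊤
  | .and φ ψ => aval box v φ ⊓ aval box v ψ
  | .neg φ => (aval box v φ)ᶜ
  | .box φ => box (aval box v φ)

/-- A formula is true at a modal algebra if it evaluates to `⊤` under every valuation. -/
def ATrue {A : Type} [BooleanAlgebra A] (box : A → A) (φ : Fml) : Prop :=
  ∀ v : ℕ → A, aval box v φ = ⊤

/-- The non-compactness rule is true at a modal algebra: for every formula `φ`,
if `φ ⊃ ◇ⁿ⊤` is true at the algebra for every `n`, then `φ ⊃ ⊥` is true at it. -/
def NCRule {A : Type} [BooleanAlgebra A] (box : A → A) : Prop :=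
  ∀ φ : Fml, (∀ n : ℕ, ATrue box (Fml.imp φ (Fml.dian n Fml.top))) →
    ATrue box (Fml.imp φ Fml.bot)

/-- The box operator of the powerset modal algebra `Alg(F)` of a frame `F = (W, R)`. -/
def boxF {W : Type} (R : W → W → Prop) (X : Set W) : Set W :=
  {w | ∀ w', R w w' → w' ∈ X}

/-- The diamond operator of `Alg(F)`: `◇_F X = R⁻¹[X]`. -/
def diaF {W : Type} (R : W → W → Prop) (X : Set W) : Set W :=
  {w | ∃ w', R w w' ∧ w' ∈ X}

/-- The worlds of the fan frame: the root `none` together with, for each `n ∈ ω`,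
a branch `{(n, i) : i < n}`. -/
def FanW : Type := Option ((n : ℕ) × Fin n)

/-- The accessibility relation of the fan frame: the root sees every branch point,
and `(n, i)` sees `(m, j)` iff `n = m` and `i < j`. -/
def FanR : FanW → FanW → Prop := fun a b =>
  match a, b with
  | none, some _ => True
  | some ⟨n, i⟩, some ⟨m, j⟩ => n = m ∧ (i : ℕ) < (j : ℕ)
  | _, _ => False

/-- The formula `□(p ∧ □p ⊃ q) ∨ □(q ∧ □q ⊃ p)` with `p = prop 0`, `q = prop 1`. -/
def fml14 : Fml :=
  Fml.or
    (Fml.box (Fml.imp (Fml.and (Fml.prop 0) (Fml.box (Fml.prop 0))) (Fml.prop 1)))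
    (Fml.box (Fml.imp (Fml.and (Fml.prop 1) (Fml.box (Fml.prop 1))) (Fml.prop 0)))


open Fml in
lemma aval_eq {W : Type} (R : W → W → Prop) (v : ℕ → Set W) (φ : Fml) :
    aval (boxF R) v φ = {w | Truth R v φ w} := by
  induction φ with
  | prop n => rfl
  | top => rfl
  | and φ ψ ihφ ihψ =>
      ext w; simp [aval, Truth, ihφ, ihψ, Set.mem_inter_iff]
  | neg φ ih =>
      ext w; simp [aval, Truth, ih]
  | box φ ih =>
      ext w; simp [aval, Truth, ih, boxF]

/-- The distinguished valuation. -/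
def vv : ℕ → Set FanW := fun n =>
  if n = 0 then {some ⟨1, 0⟩} else if n = 1 then {some ⟨2, 1⟩} else ∅

lemma fml14_false_at_root : ¬ Truth FanR vv fml14 (none : FanW) := by
  simp only [fml14, Fml.or, Fml.imp, Truth, not_not, not_forall]
  constructor
  · refine ⟨some ⟨1, 0⟩, trivial, ⟨⟨by simp [vv]; exact Set.mem_singleton _, ?_⟩, ?_⟩⟩
    · intro w' hw'
      exfalso
      match w' with
      | none => exact hw'
      | some ⟨m, j⟩ =>
        obtain ⟨rfl, hj⟩ := hw'
        omega
    · have hv : vv 1 = {some ⟨2, 1⟩} := by simp [vv]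
      rw [hv]; show ¬ ((some ⟨1, 0⟩ : FanW) = some ⟨2, 1⟩)
      intro h
      have := congrArg (fun w : FanW => w.elim 0 Sigma.fst) h
      simp at this
  · refine ⟨some ⟨2, 1⟩, trivial, ⟨⟨by simp [vv]; exact Set.mem_singleton _, ?_⟩, ?_⟩⟩
    · intro w' hw'
      exfalso
      match w' with
      | none => exact hw'
      | some ⟨m, j⟩ =>
        obtain ⟨rfl, hj⟩ := hw'
        have := j.isLt
        omega
    · have hv : vv 0 = {some ⟨1, 0⟩} := by simp [vv]
      rw [hv]; show ¬ ((some ⟨2, 1⟩ : FanW) = some ⟨1, 0⟩)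
      intro h
      have := congrArg (fun w : FanW => w.elim 0 Sigma.fst) h
      simp at this

/-- fml14 holds at every branch point, under every valuation. -/
lemma fml14_branch (v : ℕ → Set FanW) (n : ℕ) (i : Fin n) :
    Truth FanR v fml14 (some ⟨n, i⟩) := by
  simp only [fml14, Fml.or, Fml.imp, Truth, not_not, not_forall]
  rintro ⟨⟨w₁, h₁, hh₁⟩, ⟨w₂, h₂, hh₂⟩⟩
  obtain ⟨⟨hp₁, hbp₁⟩, hq₁⟩ := hh₁
  obtain ⟨⟨hq₂, hbq₂⟩, hp₂⟩ := hh₂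
  match w₁, w₂ with
  | none, _ => exact h₁
  | some _, none => exact h₂
  | some ⟨m₁, j₁⟩, some ⟨m₂, j₂⟩ =>
    obtain ⟨rfl, hij₁⟩ := h₁
    obtain ⟨rfl, hij₂⟩ := h₂
    rcases lt_trichotomy (j₁ : ℕ) (j₂ : ℕ) with h | h | h
    · exact hp₂ (hbp₁ (some ⟨n, j₂⟩) ⟨rfl, h⟩)
    · exact hp₂ (by rwa [show j₂ = j₁ from Fin.ext h.symm])
    · exact hq₁ (hbq₂ (some ⟨n, j₁⟩) ⟨rfl, h⟩)

lemma dian_chain (v : ℕ → Set FanW) :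
    ∀ (k : ℕ) (m : ℕ) (i : Fin m), (i : ℕ) + k < m →
      Truth FanR v (Fml.dian k Fml.top) (some ⟨m, i⟩) := by
  intro k
  induction k with
  | zero => intro m i h; trivial
  | succ k ih =>
      intro m i h
      simp only [Fml.dian, Fml.dia, Truth, not_forall, not_not]
      refine ⟨some ⟨m, ⟨(i : ℕ) + 1, by omega⟩⟩, ⟨rfl, Nat.lt_succ_self _⟩,
        ih m _ (by show (i : ℕ) + 1 + k < m; omega)⟩

lemma dian_root (v : ℕ → Set FanW) (k : ℕ) :
    Truth FanR v (Fml.dian k Fml.top) (none : FanW) := by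
  cases k with
  | zero => trivial
  | succ k =>
      simp only [Fml.dian, Fml.dia, Truth, not_forall, not_not]
      exact ⟨some ⟨k + 1, ⟨0, by omega⟩⟩, trivial,
        dian_chain v k (k+1) ⟨0, by omega⟩ (by show 0 + k < k + 1; omega)⟩

theorem stmt16 :
    (∃ v : ℕ → Set FanW, ¬ Truth FanR v fml14 (none : FanW)) ∧
    ¬ NCRule (boxF FanR) := by
  have hroot := fml14_false_at_root
  refine ⟨⟨vv, hroot⟩, ?_⟩
  intro hNC
  have key := hNC (Fml.neg fml14) ?_
  · have := key vv
    rw [aval_eq] at this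
    have h2 : (none : FanW) ∈ ({w | Truth FanR vv (Fml.imp (Fml.neg fml14) Fml.bot) w} : Set FanW) := by
      rw [this]; exact Set.mem_univ _
    change Truth FanR vv (Fml.imp (Fml.neg fml14) Fml.bot) none at h2
    refine hroot (by by_contra hF; exact h2 ⟨hF, fun h => h trivial⟩)
  · intro k v
    rw [aval_eq, Set.top_eq_univ, Set.eq_univ_iff_forall]
    intro w
    simp only [Set.mem_setOf_eq, Fml.imp, Truth]
    rintro ⟨hneg, hd⟩
    match w with
    | none => exact hd (dian_root v k)
    | some ⟨m, i⟩ => exact hneg (fml14_branch v m i)
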